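/- (Classical Cwikel–Lieb–Rozenblum type bound.) Let r ≥ 3/2 and let V ∈ L^r(ℝ³) be real-valued. Then for every E > 0, the Lebesgue measure of the phase-space set {(q,p) ∈ ℝ³×ℝ³ : |p|²/2 + V(q) ≤ −E} is at most (8√2 π/3) · E^{−(r−3/2)} · ∫_{ℝ³} V_−(x)^r dx, where V_−(x) = max{−V(x), 0}. -/

import Mathlib

open MeasureTheory Real

noncomputable section

abbrev E3 := EuclideanSpace ℝ (Fin 3)

/-- Classical Cwikel–Lieb–Rozenblum type bound: for `r ≥ 3/2`, `V ∈ L^r(ℝ³)` and `E > 0`,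
the phase-space volume of `{(q,p) : |p|²/2 + V(q) ≤ -E}` is at most
`(8√2 π/3) E^{-(r-3/2)} ∫ V_-^r`. -/
theorem classical_CLR_bound (r : ℝ) (hr : 3 / 2 ≤ r) (V : E3 → ℝ) (hVmeas : Measurable V)
    (hV : MemLp V (ENNReal.ofReal r)) (E : ℝ) (hE : 0 < E) :
    volume {z : E3 × E3 | ‖z.2‖ ^ 2 / 2 + V z.1 ≤ -E} ≤
      ENNReal.ofReal ((8 * Real.sqrt 2 * π / 3) * E ^ (-(r - 3 / 2)) *
        ∫ x : E3, max (-V x) 0 ^ r) := by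
  have hr0 : (0:ℝ) < r := lt_of_lt_of_le (by norm_num) hr
  set W : E3 → ℝ := fun x => max (-V x) 0 with hW
  have hWnn : ∀ x, 0 ≤ W x := fun x => le_max_right _ _
  have hWmeas : Measurable W := (hVmeas.neg).max measurable_const
  set c : ℝ := (8 * Real.sqrt 2 * π / 3) * E ^ (-(r - 3 / 2)) with hc
  have hcnn : 0 ≤ c := by
    apply mul_nonneg
    · positivity
    · exact Real.rpow_nonneg hE.le _
  -- measurability of the set
  have hfm : Measurable fun z : E3 × E3 => ‖z.2‖ ^ 2 / 2 + V z.1 := by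
    apply Measurable.add
    · exact ((measurable_norm.comp measurable_snd).pow_const 2).div_const 2
    · exact hVmeas.comp measurable_fst
  have hSmeas : MeasurableSet {z : E3 × E3 | ‖z.2‖ ^ 2 / 2 + V z.1 ≤ -E} :=
    hfm measurableSet_Iic
  -- fiber bound
  have fiber : ∀ q : E3,
      volume {p : E3 | ‖p‖ ^ 2 / 2 + V q ≤ -E} ≤ ENNReal.ofReal (c * W q ^ r) := by
    intro q
    by_cases h : V q ≤ -E
    · have hA : E ≤ W q := by
        simp only [hW, le_max_iff]; left; linarith
      have hA0 : 0 < W q := lt_of_lt_of_le hE hA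
      have hWq : W q = -V q := max_eq_left (by linarith)
      set t : ℝ := 2 * (W q - E) with ht
      have ht0 : 0 ≤ t := by nlinarith
      have hset : {p : E3 | ‖p‖ ^ 2 / 2 + V q ≤ -E} = Metric.closedBall 0 (Real.sqrt t) := by
        ext p
        simp only [Set.mem_setOf_eq, Metric.mem_closedBall, dist_zero_right]
        rw [Real.le_sqrt (norm_nonneg p) ht0]
        constructor <;> intro hp <;> nlinarith [hWq]
      rw [hset, EuclideanSpace.volume_closedBall]
      have hcard : Fintype.card (Fin 3) = 3 := by simp
      rw [hcard]
      have hGamma : Real.Gamma ((3:ℕ) / 2 + 1) = 3 / 4 * Real.sqrt π := by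
        have h1 : ((3:ℕ) / 2 + 1 : ℝ) = 3 / 2 + 1 := by norm_num
        rw [h1, Real.Gamma_add_one (by norm_num)]
        have h2 : (3 / 2 : ℝ) = 1 / 2 + 1 := by norm_num
        rw [h2, Real.Gamma_add_one (by norm_num), Real.Gamma_one_half_eq]
        ring
      rw [← ENNReal.ofReal_pow (Real.sqrt_nonneg t), ← ENNReal.ofReal_mul (by positivity)]
      apply ENNReal.ofReal_le_ofReal
      -- key real inequality
      have hπ : (0:ℝ) < π := Real.pi_pos
      have hval : Real.sqrt π ^ (3:ℕ) / Real.Gamma ((3:ℕ) / 2 + 1) = 4 / 3 * π := by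
        rw [hGamma]
        have hsq : Real.sqrt π ^ (3:ℕ) = π * Real.sqrt π := by
          rw [pow_succ, sq_sqrt hπ.le]
        rw [hsq]
        field_simp
      rw [hval]
      -- sqrt t ^ 3 = t ^ (3/2)
      have hst : Real.sqrt t ^ (3:ℕ) = t ^ (3/2 : ℝ) := by
        rw [← Real.rpow_natCast (Real.sqrt t) 3, Real.sqrt_eq_rpow,
          ← Real.rpow_mul ht0]
        norm_num
      rw [hst]
      have htle : t ^ (3/2 : ℝ) ≤ 2 * Real.sqrt 2 * (E ^ (-(r - 3/2)) * W q ^ r) := by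
        have h1 : t ^ (3/2:ℝ) = 2 ^ (3/2:ℝ) * (W q - E) ^ (3/2:ℝ) := by
          rw [ht, Real.mul_rpow (by norm_num) (by linarith)]
        have h2 : (2:ℝ) ^ (3/2:ℝ) = 2 * Real.sqrt 2 := by
          rw [show (3/2:ℝ) = 1 + 1/2 by norm_num, Real.rpow_add (by norm_num),
            Real.rpow_one, ← Real.sqrt_eq_rpow]
        have h3 : (W q - E) ^ (3/2:ℝ) ≤ W q ^ (3/2:ℝ) :=
          Real.rpow_le_rpow (by linarith) (by linarith) (by norm_num)
        have h4 : W q ^ (3/2:ℝ) ≤ E ^ (-(r - 3/2)) * W q ^ r := by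
          have e1 : W q ^ (3/2:ℝ) = W q ^ (3/2 - r : ℝ) * W q ^ r := by
            rw [← Real.rpow_add hA0]; ring_nf
          rw [e1]
          apply mul_le_mul_of_nonneg_right _ (Real.rpow_nonneg hA0.le r)
          have := Real.rpow_le_rpow_of_nonpos hE hA (show (3/2 - r : ℝ) ≤ 0 by linarith)
          calc W q ^ (3/2 - r : ℝ) ≤ E ^ (3/2 - r : ℝ) := this
            _ = E ^ (-(r - 3/2)) := by ring_nf
        calc t ^ (3/2:ℝ) = 2 ^ (3/2:ℝ) * (W q - E) ^ (3/2:ℝ) := h1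
          _ ≤ 2 * Real.sqrt 2 * (E ^ (-(r - 3/2)) * W q ^ r) := by
              rw [h2]
              apply mul_le_mul_of_nonneg_left _ (by positivity)
              exact le_trans h3 h4
      have hs2 : (0:ℝ) ≤ Real.sqrt 2 := Real.sqrt_nonneg 2
      calc t ^ (3/2:ℝ) * (4/3*π) ≤ 2 * Real.sqrt 2 * (E ^ (-(r - 3/2)) * W q ^ r) * (4/3*π) := by
            apply mul_le_mul_of_nonneg_right htle (by positivity)
        _ = c * W q ^ r := by rw [hc]; ring
    · have hempty : {p : E3 | ‖p‖ ^ 2 / 2 + V q ≤ -E} = ∅ := by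
        ext p
        simp only [Set.mem_setOf_eq, Set.mem_empty_iff_false, iff_false, not_le]
        nlinarith [sq_nonneg ‖p‖, norm_nonneg p]
      rw [hempty, measure_empty]
      exact zero_le
  -- integrability of W ^ r
  have hWlp : MemLp W (ENNReal.ofReal r) := by
    apply hV.mono (hWmeas.aestronglyMeasurable)
    filter_upwards with x
    rw [Real.norm_eq_abs, Real.norm_eq_abs, abs_of_nonneg (hWnn x)]
    simp only [hW]
    rcases le_total (-V x) 0 with h | h
    · rw [max_eq_right h]; exact abs_nonneg _
    · rw [max_eq_left h]; exact neg_le_abs (V x)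
  have hint : Integrable (fun x => W x ^ r) := by
    have := hWlp.integrable_norm_rpow (by simp [hr0]) (by simp)
    simpa [ENNReal.toReal_ofReal hr0.le, Real.norm_eq_abs,
      fun x => abs_of_nonneg (hWnn x)] using this
  -- assemble
  calc volume {z : E3 × E3 | ‖z.2‖ ^ 2 / 2 + V z.1 ≤ -E}
      = ∫⁻ q : E3, volume {p : E3 | ‖p‖ ^ 2 / 2 + V q ≤ -E} := by
        rw [Measure.volume_eq_prod, Measure.prod_apply hSmeas]
        rfl
    _ ≤ ∫⁻ q : E3, ENNReal.ofReal (c * W q ^ r) := lintegral_mono fun q => fiber q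
    _ = ENNReal.ofReal (∫ q : E3, c * W q ^ r) := by
        rw [ofReal_integral_eq_lintegral_ofReal (hint.const_mul c)]
        filter_upwards with x
        exact mul_nonneg hcnn (Real.rpow_nonneg (hWnn x) r)
    _ = ENNReal.ofReal ((8 * Real.sqrt 2 * π / 3) * E ^ (-(r - 3 / 2)) *
        ∫ x : E3, max (-V x) 0 ^ r) := by
        rw [integral_const_mul, hc, mul_assoc]

end
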